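/- arXiv:cs/0003021 — 7 statements merged into one kernel-verified Lean document; each statement's English description precedes it below -/
import Mathlib

section
/- The relation R_l satisfies Epstein's conditions R1, R3 and R6, and satisfies R4 for contingent formulas: (i) L_{¬α} = L_α, hence R_l(α,β) iff R_l(¬α,β); (ii) R_l(α,β) iff R_l(β,α); (iii) if R_l(α,β) and β ⇔ β' then R_l(α,β'); (iv) if α is neither a tautology nor a contradiction then R_l(α,α). -/
namespace BeliefSeq

/-- Propositional formulas over a type `ν` of propositional variables,
with connectives ¬, ∧, ∨, →, ↔ and constants true, false. -/
inductive PropForm (ν : Type) : Type where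
  | var : ν → PropForm ν
  | tru : PropForm ν
  | fls : PropForm ν
  | neg : PropForm ν → PropForm ν
  | conj : PropForm ν → PropForm ν → PropForm ν
  | disj : PropForm ν → PropForm ν → PropForm ν
  | impl : PropForm ν → PropForm ν → PropForm ν
  | biim : PropForm ν → PropForm ν → PropForm ν

namespace PropForm

variable {ν : Type}

/-- Classical (two-valued) evaluation of a formula under a valuation. -/
def eval (v : ν → Bool) : PropForm ν → Bool
  | var x => v x
  | tru => true
  | fls => false
  | neg φ => !(φ.eval v)
  | conj φ ψ => φ.eval v && ψ.eval v
  | disj φ ψ => φ.eval v || ψ.eval v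
  | impl φ ψ => !(φ.eval v) || ψ.eval v
  | biim φ ψ => φ.eval v == ψ.eval v

/-- The set `L(α)` of variables occurring syntactically in a formula. -/
def vars : PropForm ν → Set ν
  | var x => {x}
  | tru => ∅
  | fls => ∅
  | neg φ => φ.vars
  | conj φ ψ => φ.vars ∪ ψ.vars
  | disj φ ψ => φ.vars ∪ ψ.vars
  | impl φ ψ => φ.vars ∪ ψ.vars
  | biim φ ψ => φ.vars ∪ ψ.vars

end PropForm

variable {ν : Type}

/-- `α ⇔ β` : logical equivalence (α ↔ β is a tautology). -/
def Equiv (α β : PropForm ν) : Prop := ∀ v, α.eval v = β.eval v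

def Tautology (α : PropForm ν) : Prop := ∀ v, α.eval v = true

def Contradiction (α : PropForm ν) : Prop := ∀ v, α.eval v = false

/-- Classical consequence `Γ ⊢ γ`. -/
def Entails (Γ : Set (PropForm ν)) (γ : PropForm ν) : Prop :=
  ∀ v, (∀ φ ∈ Γ, φ.eval v = true) → γ.eval v = true

/-- Consistency (satisfiability) of a set of formulas. -/
def Satisfiable (Γ : Set (PropForm ν)) : Prop :=
  ∃ v, ∀ φ ∈ Γ, φ.eval v = true

/-- `V` expresses `α`: α is logically equivalent to some formula
all of whose variables lie in `V`. -/
def Expresses (V : Set ν) (α : PropForm ν) : Prop :=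
  ∃ β : PropForm ν, Equiv α β ∧ β.vars ⊆ V

/-- `L_α` : the smallest language of `α` (intersection of all sets of
variables expressing `α`). -/
def Lang (α : PropForm ν) : Set ν := ⋂₀ {V : Set ν | Expresses V α}

/-- Direct relevance (`0`-relevance): logical language overlap `L_α ∩ L_β ≠ ∅`. -/
def DirectRel (α β : PropForm ν) : Prop := (Lang α ∩ Lang β).Nonempty

/-- `k`-relevance of `α`, `β` w.r.t. the belief sequence `σ`:
there is a chain `χ_1, …, χ_k` of formulas of `σ` with
`α, χ₁` directly relevant, each `χ_i, χ_{i+1}` directly relevant,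
and `χ_k, β` directly relevant (for `k = 0` this is direct relevance). -/
def KRel (k : ℕ) (α β : PropForm ν) (σ : List (PropForm ν)) : Prop :=
  ∃ l : List (PropForm ν), l.length = k ∧ (∀ χ ∈ l, χ ∈ σ) ∧
    List.Chain' DirectRel (α :: (l ++ [β]))

/-- `rel(α,β,σ)` : the least `k` such that `α, β` are `k`-relevant w.r.t. `σ`
(`∞ = ⊤` if they are irrelevant). -/
noncomputable def relDeg (α β : PropForm ν) (σ : List (PropForm ν)) : ℕ∞ :=
  sInf {n : ℕ∞ | ∃ k : ℕ, n = (k : ℕ∞) ∧ KRel k α β σ}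

open Classical in
/-- The priority ordering imposed by the query `γ` on the (indexed) entries of `σ`:
more relevant first; among equally relevant entries, more recent
(larger index) first. -/
noncomputable def priority (γ : PropForm ν) (σ : List (PropForm ν)) :
    (ℕ × PropForm ν) → (ℕ × PropForm ν) → Bool :=
  fun a b =>
    decide (relDeg γ a.2 σ < relDeg γ b.2 σ ∨
      (relDeg γ a.2 σ = relDeg γ b.2 σ ∧ b.1 ≤ a.1))

/-- The entries `δ_1, …, δ_n` of `σ` reordered by the priority above. -/
noncomputable def prioritized (γ : PropForm ν) (σ : List (PropForm ν)) :
    List (PropForm ν) :=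
  ((σ.zipIdx.map Prod.swap).mergeSort (priority γ σ)).map Prod.snd

open Classical in
/-- The prioritized maxiconsistent set `Γ_{⟨σ,k,γ⟩}` : go through `δ_1, …, δ_n`
in priority order, skipping `δ_{i+1}` if `Γ^i ⊢ ¬δ_{i+1}` or `δ_{i+1}` is not
`k`-relevant to `γ` w.r.t. `σ`, and adding it otherwise. -/
noncomputable def Gamma (σ : List (PropForm ν)) (k : ℕ) (γ : PropForm ν) :
    Set (PropForm ν) :=
  (prioritized γ σ).foldl
    (fun Γ δ =>
      if Entails Γ (PropForm.neg δ) ∨ (k : ℕ∞) < relDeg γ δ σ then Γ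
      else insert δ Γ) ∅

/-- `σ ⊢_k γ` iff `Γ_{⟨σ,k,γ⟩} ⊢ γ`. -/
def InferK (σ : List (PropForm ν)) (k : ℕ) (γ : PropForm ν) : Prop :=
  Entails (Gamma σ k γ) γ

/-- `C_k(σ) = {γ | σ ⊢_k γ}`. -/
def Ck (σ : List (PropForm ν)) (k : ℕ) : Set (PropForm ν) :=
  {γ | InferK σ k γ}

/-- Revision `σ * γ` : concatenation of `γ` at the (most recent) end of `σ`. -/
def revise (σ : List (PropForm ν)) (γ : PropForm ν) : List (PropForm ν) :=
  σ ++ [γ]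


open Classical

/-- Syntactic variables as a list. -/
def varsList : PropForm ν → List ν
  | .var x => [x]
  | .tru => []
  | .fls => []
  | .neg φ => varsList φ
  | .conj φ ψ => varsList φ ++ varsList ψ
  | .disj φ ψ => varsList φ ++ varsList ψ
  | .impl φ ψ => varsList φ ++ varsList ψ
  | .biim φ ψ => varsList φ ++ varsList ψ

lemma mem_vars_iff (α : PropForm ν) (x : ν) : x ∈ α.vars ↔ x ∈ varsList α := by
  induction α <;> simp_all [PropForm.vars, varsList]

lemma eval_congr (α : PropForm ν) (v v' : ν → Bool)
    (h : ∀ x ∈ α.vars, v x = v' x) : α.eval v = α.eval v' := by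
  induction α with
  | var x => exact h x rfl
  | tru => rfl
  | fls => rfl
  | neg φ ih => simp [PropForm.eval, ih h]
  | conj φ ψ ih1 ih2 =>
      simp only [PropForm.eval]
      rw [ih1 fun x hx => h x (Or.inl hx), ih2 fun x hx => h x (Or.inr hx)]
  | disj φ ψ ih1 ih2 =>
      simp only [PropForm.eval]
      rw [ih1 fun x hx => h x (Or.inl hx), ih2 fun x hx => h x (Or.inr hx)]
  | impl φ ψ ih1 ih2 =>
      simp only [PropForm.eval]
      rw [ih1 fun x hx => h x (Or.inl hx), ih2 fun x hx => h x (Or.inr hx)]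
  | biim φ ψ ih1 ih2 =>
      simp only [PropForm.eval]
      rw [ih1 fun x hx => h x (Or.inl hx), ih2 fun x hx => h x (Or.inr hx)]

/-- `α` depends on variable `x`. -/
def Dep (α : PropForm ν) (x : ν) : Prop :=
  ∃ v v' : ν → Bool, (∀ y, y ≠ x → v y = v' y) ∧ α.eval v ≠ α.eval v'

lemma dep_mem_lang {α : PropForm ν} {x : ν} (h : Dep α x) : x ∈ Lang α := by
  obtain ⟨v, v', hag, hne⟩ := h
  intro V hV
  obtain ⟨β, hβ, hsub⟩ := hV
  by_contra hx
  apply hne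
  have h1 : β.eval v = β.eval v' := by
    apply eval_congr
    intro y hy
    exact hag y (fun hyx => hx (hyx ▸ hsub hy))
  rw [hβ v, hβ v', h1]

lemma eval_eq_of_nodep {α : PropForm ν} (h : ∀ x, ¬ Dep α x) :
    ∀ L : List ν, ∀ v v' : ν → Bool, (∀ y, v y ≠ v' y → y ∈ L) →
      α.eval v = α.eval v' := by
  intro L
  induction L with
  | nil =>
      intro v v' hvv
      have : v = v' := funext fun y => by
        by_contra hy; exact List.not_mem_nil (hvv y hy)
      rw [this]
  | cons x L ih =>
      intro v v' hvv
      set w := Function.update v x (v' x) with hw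
      have h1 : α.eval v = α.eval w := by
        by_contra hne
        exact h x ⟨v, w, fun y hy => (Function.update_of_ne hy _ _).symm, hne⟩
      have h2 : α.eval w = α.eval v' := by
        apply ih
        intro y hy
        by_cases hyx : y = x
        · subst hyx
          exact (hy (Function.update_self _ _ _)).elim
        · have := hvv y (by rwa [hw, Function.update_of_ne hyx] at hy)
          rcases List.mem_cons.mp this with h' | h'
          · exact (hyx h').elim
          · exact h'
      rw [h1, h2]

lemma lang_nonempty_of_contingent {α : PropForm ν}
    (hT : ¬ Tautology α) (hC : ¬ Contradiction α) : (Lang α).Nonempty := by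
  have hdep : ∃ x, Dep α x := by
    by_contra hnd
    push_neg at hnd
    obtain ⟨v, hv⟩ : ∃ v, α.eval v = false := by
      simp only [Tautology, not_forall] at hT
      obtain ⟨v, hv⟩ := hT
      exact ⟨v, by simpa using hv⟩
    obtain ⟨w, hw⟩ : ∃ w, α.eval w = true := by
      simp only [Contradiction, not_forall] at hC
      obtain ⟨w, hw⟩ := hC
      exact ⟨w, by simpa using hw⟩
    set u : ν → Bool := fun y => if y ∈ varsList α then w y else v y with hu
    have h1 : α.eval u = α.eval w := by
      apply eval_congr
      intro y hy
      simp [hu, (mem_vars_iff α y).1 hy]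
    have h2 : α.eval v = α.eval u := by
      apply eval_eq_of_nodep hnd (varsList α)
      intro y hy
      by_contra hmem
      simp [hu, hmem] at hy
    rw [h2, h1, hw] at hv
    exact Bool.noConfusion hv
  obtain ⟨x, hx⟩ := hdep
  exact ⟨x, dep_mem_lang hx⟩

lemma expresses_neg_iff (V : Set ν) (α : PropForm ν) :
    Expresses V (PropForm.neg α) ↔ Expresses V α := by
  constructor
  · rintro ⟨β, hβ, hsub⟩
    refine ⟨PropForm.neg β, fun v => ?_, hsub⟩
    have := hβ v
    simp only [PropForm.eval] at this ⊢
    rw [← this, Bool.not_not]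
  · rintro ⟨β, hβ, hsub⟩
    exact ⟨PropForm.neg β, fun v => by simp [PropForm.eval, hβ v], hsub⟩

lemma lang_neg (α : PropForm ν) : Lang (PropForm.neg α) = Lang α := by
  have h : {V : Set ν | Expresses V (PropForm.neg α)} = {V : Set ν | Expresses V α} :=
    Set.ext fun V => expresses_neg_iff V α
  unfold Lang
  rw [h]

lemma lang_congr {β β' : PropForm ν} (h : Equiv β β') : Lang β = Lang β' := by
  have he : {V : Set ν | Expresses V β} = {V : Set ν | Expresses V β'} := by
    ext V
    constructor
    · rintro ⟨δ, hδ, hsub⟩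
      exact ⟨δ, fun v => (h v).symm.trans (hδ v), hsub⟩
    · rintro ⟨δ, hδ, hsub⟩
      exact ⟨δ, fun v => (h v).trans (hδ v), hsub⟩
  unfold Lang
  rw [he]

/-- `R_l` satisfies Epstein's R1, R3, R6, and R4 for contingent
formulas: (i) `L_¬α = L_α`, hence `R_l(α,β) ↔ R_l(¬α,β)`; (ii) symmetry;
(iii) invariance under logical equivalence in the second argument;
(iv) reflexivity for formulas that are neither tautologies nor contradictions. -/
theorem Rl_satisfies_R1_R3_R6_and_contingent_R4 {ν : Type} :
    (∀ α β : PropForm ν,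
      Lang (PropForm.neg α) = Lang α ∧ (DirectRel α β ↔ DirectRel (PropForm.neg α) β)) ∧
    (∀ α β : PropForm ν, DirectRel α β ↔ DirectRel β α) ∧
    (∀ α β β' : PropForm ν, DirectRel α β → Equiv β β' → DirectRel α β') ∧
    (∀ α : PropForm ν, ¬ Tautology α → ¬ Contradiction α → DirectRel α α) := by
  refine ⟨fun α β => ⟨lang_neg α, ?_⟩, fun α β => ?_, fun α β β' h he => ?_, fun α hT hC => ?_⟩
  · unfold DirectRel
    rw [lang_neg]
  · unfold DirectRel
    rw [Set.inter_comm]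
  · unfold DirectRel at h ⊢
    rwa [← lang_congr he]
  · obtain ⟨x, hx⟩ := lang_nonempty_of_contingent hT hC
    exact ⟨x, hx, hx⟩

end BeliefSeq
end

section
/- The relation R_l satisfies condition R5a (half of Epstein's R5): for all propositional formulas α, β, γ, if R_l(α, β→γ) then R_l(α,β) or R_l(α,γ). -/
namespace BeliefSeq

variable {ν : Type}

/-- `R_l` satisfies R5a: if `R_l(α, β→γ)` then `R_l(α,β)` or `R_l(α,γ)`. -/
theorem Rl_satisfies_R5a {ν : Type} (α β γ : PropForm ν)
    (h : DirectRel α (PropForm.impl β γ)) :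
    DirectRel α β ∨ DirectRel α γ := by
  obtain ⟨x, hxα, hxi⟩ := h
  by_contra hc
  push_neg at hc
  obtain ⟨h1, h2⟩ := hc
  simp only [DirectRel, Set.not_nonempty_iff_eq_empty] at h1 h2
  have hxb : x ∉ Lang β := fun hb => Set.eq_empty_iff_forall_notMem.mp h1 x ⟨hxα, hb⟩
  have hxg : x ∉ Lang γ := fun hg => Set.eq_empty_iff_forall_notMem.mp h2 x ⟨hxα, hg⟩
  simp only [Lang, Set.mem_sInter, Set.mem_setOf_eq, not_forall] at hxb hxg
  obtain ⟨V1, ⟨β', hβe, hβv⟩, hxV1⟩ := hxb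
  obtain ⟨V2, ⟨γ', hγe, hγv⟩, hxV2⟩ := hxg
  have hexp : Expresses (V1 ∪ V2) (PropForm.impl β γ) := by
    refine ⟨PropForm.impl β' γ', fun v => ?_, ?_⟩
    · simp [PropForm.eval, hβe v, hγe v]
    · simp only [PropForm.vars]
      exact Set.union_subset_union hβv hγv
  have := hxi (V1 ∪ V2) hexp
  rcases this with h | h
  · exact hxV1 h
  · exact hxV2 h

end BeliefSeq
end

section
/- Epstein's condition R2 is incompatible with the equivalence-invariance condition R6: any binary relation R on propositional formulas satisfying R1, R2, R3, R4 and R6 is the total relation, i.e., R(α,β) holds for every pair of formulas α, β. Consequently no relation that fails to relate some pair of formulas can satisfy R1, R2, R3, R4 and R6 simultaneously. -/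
namespace BeliefSeq

variable {ν : Type}

/-- Epstein's R2 is incompatible with R6: any binary relation on
formulas satisfying R1, R2, R3, R4 and R6 is the total relation. -/
theorem R2_incompatible_with_R6 {ν : Type} (R : PropForm ν → PropForm ν → Prop)
    (hR1 : ∀ α β, R α β ↔ R (PropForm.neg α) β)
    (hR2 : ∀ α β γ, R α (PropForm.conj β γ) ↔ R α (PropForm.impl β γ))
    (hR3 : ∀ α β, R α β ↔ R β α)
    (hR4 : ∀ α, R α α)
    (hR6 : ∀ α β β', R α β → Equiv β β' → R α β') :
    ∀ α β, R α β := by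
  intro α β
  have h1 : R β (PropForm.conj β β) :=
    hR6 β β _ (hR4 β) (fun v => by simp [PropForm.eval])
  have h2 : R β (PropForm.impl β β) := (hR2 β β β).mp h1
  have h3 : R β (PropForm.impl α α) :=
    hR6 β _ _ h2 (fun v => by simp [PropForm.eval])
  have h4 : R β (PropForm.conj α α) := (hR2 β α α).mpr h3
  have h5 : R β α := hR6 β _ _ h4 (fun v => by simp [PropForm.eval])
  exact (hR3 β α).mp h5

end BeliefSeq
end

section
/- For every belief sequence σ, every level k and every query formula γ, the set Γ_{σ,k,γ} produced by the prioritized maxiconsistent construction is consistent (satisfiable); in particular Γ_{σ,k,γ} ⊬ ⊥, even when [[σ]] is inconsistent. -/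
namespace BeliefSeq

variable {ν : Type}

open Classical in
theorem foldl_sat {ν : Type} (k : ℕ) (γ : PropForm ν) (σ : List (PropForm ν)) :
    ∀ (l : List (PropForm ν)) (Γ : Set (PropForm ν)), Satisfiable Γ →
      Satisfiable (l.foldl
        (fun Γ δ =>
          if Entails Γ (PropForm.neg δ) ∨ (k : ℕ∞) < relDeg γ δ σ then Γ
          else insert δ Γ) Γ) := by
  intro l
  induction l with
  | nil => intro Γ h; exact h
  | cons δ t ih =>
    intro Γ h
    simp only [List.foldl_cons]
    by_cases hc : Entails Γ (PropForm.neg δ) ∨ (k : ℕ∞) < relDeg γ δ σ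
    · rw [if_pos hc]; exact ih Γ h
    · rw [if_neg hc]
      apply ih
      push_neg at hc
      obtain ⟨hne, _⟩ := hc
      unfold Entails at hne
      push_neg at hne
      obtain ⟨v, hv, hd⟩ := hne
      refine ⟨v, ?_⟩
      intro φ hφ
      rcases hφ with rfl | hφ
      · simp [PropForm.eval] at hd
        simpa using hd
      · exact hv φ hφ

/-- for every σ, k, γ, the prioritized maxiconsistent set
`Γ_{⟨σ,k,γ⟩}` is consistent (satisfiable); in particular it does not entail ⊥,
even when `[[σ]]` is inconsistent. -/
theorem Gamma_consistent {ν : Type} (σ : List (PropForm ν)) (k : ℕ)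
    (γ : PropForm ν) :
    Satisfiable (Gamma σ k γ) ∧ ¬ Entails (Gamma σ k γ) PropForm.fls := by
  have hs : Satisfiable (Gamma σ k γ) := foldl_sat k γ σ _ ∅ ⟨fun _ => true, by simp⟩
  refine ⟨hs, ?_⟩
  intro hE
  obtain ⟨v, hv⟩ := hs
  have := hE v hv
  simp [PropForm.eval] at this

end BeliefSeq
end

section
/- The inference procedure is monotonic in the degree of relevance k: for all levels k ≤ k', Γ_{σ,k,γ} ⊆ Γ_{σ,k',γ}; consequently σ ⊢_k γ implies σ ⊢_{k'} γ, and hence C_k(σ) ⊆ C_{k'}(σ). -/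
namespace BeliefSeq

variable {ν : Type}

section Aux
open Classical
variable {ν : Type}

private lemma grow (γ : PropForm ν) (σ : List (PropForm ν)) (k : ℕ) :
    ∀ (L : List (PropForm ν)) (Γ0 : Set (PropForm ν)),
      Γ0 ⊆ L.foldl
        (fun Γ δ =>
          if Entails Γ (PropForm.neg δ) ∨ (k : ℕ∞) < relDeg γ δ σ then Γ
          else insert δ Γ) Γ0 := by
  intro L
  induction L with
  | nil => intro Γ0; simp
  | cons δ L ih =>
      intro Γ0
      rw [List.foldl_cons]
      refine Set.Subset.trans ?_ (ih _)
      split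
      · exact Set.Subset.rfl
      · exact Set.subset_insert _ _

private lemma frozen (γ : PropForm ν) (σ : List (PropForm ν)) (k : ℕ) :
    ∀ (L : List (PropForm ν)) (Γ0 : Set (PropForm ν)),
      (∀ δ ∈ L, (k : ℕ∞) < relDeg γ δ σ) →
      L.foldl
        (fun Γ δ =>
          if Entails Γ (PropForm.neg δ) ∨ (k : ℕ∞) < relDeg γ δ σ then Γ
          else insert δ Γ) Γ0 = Γ0 := by
  intro L
  induction L with
  | nil => intro Γ0 _; simp
  | cons δ L ih =>
      intro Γ0 hall
      rw [List.foldl_cons, if_pos (Or.inr (hall δ List.mem_cons_self))]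
      exact ih Γ0 fun x hx => hall x (List.mem_cons_of_mem _ hx)

private lemma fold_mono (γ : PropForm ν) (σ : List (PropForm ν)) (k k' : ℕ)
    (hkk : k ≤ k') :
    ∀ (L : List (PropForm ν)),
      L.Pairwise (fun a b => relDeg γ a σ ≤ relDeg γ b σ) →
      ∀ Γ0 : Set (PropForm ν),
      L.foldl
        (fun Γ δ =>
          if Entails Γ (PropForm.neg δ) ∨ (k : ℕ∞) < relDeg γ δ σ then Γ
          else insert δ Γ) Γ0 ⊆
      L.foldl
        (fun Γ δ =>
          if Entails Γ (PropForm.neg δ) ∨ (k' : ℕ∞) < relDeg γ δ σ then Γ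
          else insert δ Γ) Γ0 := by
  intro L
  induction L with
  | nil => intro _ Γ0; simp
  | cons δ L ih =>
      intro hp Γ0
      rw [List.pairwise_cons] at hp
      obtain ⟨hδ, hL⟩ := hp
      by_cases hrel : (k : ℕ∞) < relDeg γ δ σ
      · -- everything in δ :: L is irrelevant at level k
        have hall : ∀ x ∈ δ :: L, (k : ℕ∞) < relDeg γ x σ := by
          intro x hx
          rcases List.mem_cons.mp hx with rfl | hx
          · exact hrel
          · exact lt_of_lt_of_le hrel (hδ x hx)
        rw [frozen γ σ k _ _ hall]
        exact grow γ σ k' _ _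
      · have hrel' : ¬ (k' : ℕ∞) < relDeg γ δ σ := by
          intro hc
          exact hrel (lt_of_le_of_lt (by exact_mod_cast Nat.cast_le.mpr hkk) hc)
        rw [List.foldl_cons, List.foldl_cons]
        have hstep :
            (if Entails Γ0 (PropForm.neg δ) ∨ (k : ℕ∞) < relDeg γ δ σ then Γ0
              else insert δ Γ0) =
            (if Entails Γ0 (PropForm.neg δ) ∨ (k' : ℕ∞) < relDeg γ δ σ then Γ0
              else insert δ Γ0) := by
          by_cases he : Entails Γ0 (PropForm.neg δ)
          · rw [if_pos (Or.inl he), if_pos (Or.inl he)]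
          · rw [if_neg (by tauto), if_neg (by tauto)]
        rw [hstep]
        exact ih hL _

private lemma prioritized_sorted (γ : PropForm ν) (σ : List (PropForm ν)) :
    (prioritized γ σ).Pairwise (fun a b => relDeg γ a σ ≤ relDeg γ b σ) := by
  unfold prioritized
  rw [List.pairwise_map]
  have := List.pairwise_mergeSort (le := priority γ σ)
    (by
      intro a b c hab hbc
      simp only [priority, decide_eq_true_eq] at *
      rcases hab with h1 | ⟨h1, h1'⟩ <;> rcases hbc with h2 | ⟨h2, h2'⟩
      · exact Or.inl (lt_trans h1 h2)
      · exact Or.inl (h2 ▸ h1)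
      · exact Or.inl (h1 ▸ h2)
      · exact Or.inr ⟨h1.trans h2, le_trans h2' h1'⟩)
    (by
      intro a b
      simp only [priority, Bool.or_eq_true, decide_eq_true_eq]
      rcases lt_trichotomy (relDeg γ a.2 σ) (relDeg γ b.2 σ) with h | h | h
      · exact Or.inl (Or.inl h)
      · rcases le_total b.1 a.1 with h' | h'
        · exact Or.inl (Or.inr ⟨h, h'⟩)
        · exact Or.inr (Or.inr ⟨h.symm, h'⟩)
      · exact Or.inr (Or.inl h))
    (σ.zipIdx.map Prod.swap)
  refine this.imp ?_
  intro a b hab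
  simp only [priority, decide_eq_true_eq] at hab
  rcases hab with h | ⟨h, _⟩
  · exact le_of_lt h
  · exact le_of_eq h

end Aux

/-- the inference procedure is monotonic in the degree of
relevance k: for `k ≤ k'`, `Γ_{⟨σ,k,γ⟩} ⊆ Γ_{⟨σ,k',γ⟩}`, hence `σ ⊢_k γ`
implies `σ ⊢_{k'} γ`, and `C_k(σ) ⊆ C_{k'}(σ)`. -/
theorem inference_monotone_in_k {ν : Type} (σ : List (PropForm ν))
    (k k' : ℕ) (h : k ≤ k') :
    (∀ γ : PropForm ν,
      Gamma σ k γ ⊆ Gamma σ k' γ ∧ (InferK σ k γ → InferK σ k' γ)) ∧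
    Ck σ k ⊆ Ck σ k' := by
  have hG : ∀ γ : PropForm ν, Gamma σ k γ ⊆ Gamma σ k' γ := by
    intro γ
    unfold Gamma
    exact fold_mono γ σ k k' h _ (prioritized_sorted γ σ) ∅
  have hI : ∀ γ : PropForm ν, InferK σ k γ → InferK σ k' γ := by
    intro γ hγ v hv
    exact hγ v fun φ hφ => hv φ (hG γ hφ)
  exact ⟨fun γ => ⟨hG γ, hI γ⟩, fun γ hγ => hI γ hγ⟩

end BeliefSeq
end

section
/- Weak Inclusion: if γ is a satisfiable formula (γ is not a contradiction), then for every belief sequence σ and every level k, σ * γ ⊢_k γ, i.e., after revising σ by γ the query γ is answered affirmatively. -/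
namespace BeliefSeq

variable {ν : Type}

/- ### Auxiliary lemmas for weak inclusion -/

open Classical

/-- Evaluation only depends on the variables occurring in the formula. -/
lemma eval_congr_s15 (φ : PropForm ν) (v w : ν → Bool)
    (h : ∀ x ∈ φ.vars, v x = w x) : φ.eval v = φ.eval w := by
  induction φ with
  | var x => exact h x rfl
  | tru => rfl
  | fls => rfl
  | neg φ ih =>
      simp only [PropForm.eval]; rw [ih (fun x hx => h x hx)]
  | conj φ ψ ih1 ih2 =>
      simp only [PropForm.eval]
      rw [ih1 (fun x hx => h x (Or.inl hx)), ih2 (fun x hx => h x (Or.inr hx))]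
  | disj φ ψ ih1 ih2 =>
      simp only [PropForm.eval]
      rw [ih1 (fun x hx => h x (Or.inl hx)), ih2 (fun x hx => h x (Or.inr hx))]
  | impl φ ψ ih1 ih2 =>
      simp only [PropForm.eval]
      rw [ih1 (fun x hx => h x (Or.inl hx)), ih2 (fun x hx => h x (Or.inr hx))]
  | biim φ ψ ih1 ih2 =>
      simp only [PropForm.eval]
      rw [ih1 (fun x hx => h x (Or.inl hx)), ih2 (fun x hx => h x (Or.inr hx))]

-- A classically-defined update of a valuation at one point.
open Classical in
noncomputable def upd (v : ν → Bool) (x : ν) (b : Bool) : ν → Bool :=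
  fun y => if y = x then b else v y

lemma upd_same (v : ν → Bool) (x : ν) (b : Bool) : upd v x b x = b := by
  simp [upd]

lemma upd_ne (v : ν → Bool) (x y : ν) (b : Bool) (h : y ≠ x) :
    upd v x b y = v y := by
  simp [upd, h]

/-- If flipping `x` changes the value of `γ`, then `x` belongs to the
smallest language of `γ`. -/
lemma dependent_mem_Lang (γ : PropForm ν) (x : ν) (v : ν → Bool)
    (h : γ.eval v ≠ γ.eval (upd v x (!v x))) : x ∈ Lang γ := by
  rw [Lang, Set.mem_sInter]
  intro V hV
  obtain ⟨β, heq, hsub⟩ := hV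
  by_contra hx
  apply h
  have h1 : β.eval v = β.eval (upd v x (!v x)) := by
    apply eval_congr_s15
    intro y hy
    have : y ≠ x := fun hyx => hx (hsub (hyx ▸ hy))
    rw [upd_ne _ _ _ _ this]
  rw [heq v, heq (upd v x (!v x)), h1]

/-- If two valuations differing only inside a finite set give `γ` different
values, then `γ` depends on some variable (hence `Lang γ` is nonempty). -/
lemma exists_dep (γ : PropForm ν) (S : Finset ν) :
    ∀ v w : ν → Bool, (∀ x ∉ S, v x = w x) → γ.eval v ≠ γ.eval w →
      (Lang γ).Nonempty := by
  classical
  induction S using Finset.induction_on with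
  | empty =>
      intro v w hag hne
      exact absurd (eval_congr_s15 γ v w (fun x _ => hag x (by simp))) hne
  | @insert a S ha IH =>
      intro v w hag hne
      set v' : ν → Bool := upd v a (w a) with hv'
      have hag' : ∀ x ∉ S, v' x = w x := by
        intro x hx
        by_cases hxa : x = a
        · subst hxa; rw [hv']; exact upd_same v x (w x)
        · rw [hv', upd_ne _ _ _ _ hxa]
          exact hag x (by simp [hx, hxa])
      by_cases hc : γ.eval v' = γ.eval w
      · have hvv' : γ.eval v ≠ γ.eval v' := fun hh => hne (hh.trans hc)
        have hwa : w a = !v a := by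
          by_contra hwa
          apply hvv'
          apply eval_congr_s15
          intro y _
          by_cases hy : y = a
          · subst hy
            rw [hv', upd_same]
            cases hva : v y <;> cases hwb : w y <;> simp_all
          · rw [hv', upd_ne _ _ _ _ hy]
        refine ⟨a, dependent_mem_Lang γ a v ?_⟩
        rwa [← hwa]
      · exact IH v' w hag' hc

/-- The set of variables of a formula is finite. -/
lemma vars_finite (φ : PropForm ν) : φ.vars.Finite := by
  induction φ with
  | var x => exact Set.finite_singleton x
  | tru => exact Set.finite_empty
  | fls => exact Set.finite_empty
  | neg φ ih => exact ih
  | conj φ ψ ih1 ih2 => exact ih1.union ih2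
  | disj φ ψ ih1 ih2 => exact ih1.union ih2
  | impl φ ψ ih1 ih2 => exact ih1.union ih2
  | biim φ ψ ih1 ih2 => exact ih1.union ih2

/-- A contingent formula has a nonempty smallest language. -/
lemma lang_nonempty (γ : PropForm ν) (h1 : ¬ Tautology γ)
    (h2 : ¬ Contradiction γ) : (Lang γ).Nonempty := by
  classical
  rw [Tautology, not_forall] at h1
  rw [Contradiction, not_forall] at h2
  obtain ⟨v, hv⟩ := h1
  obtain ⟨w, hw⟩ := h2
  have hvf : γ.eval v = false := by cases hvv : γ.eval v <;> simp_all
  have hwt : γ.eval w = true := by cases hww : γ.eval w <;> simp_all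
  set w' : ν → Bool := fun y => if y ∈ γ.vars then w y else v y with hw'
  have hew : γ.eval w' = γ.eval w := by
    apply eval_congr_s15; intro x hx; simp [hw', hx]
  apply exists_dep γ (vars_finite γ).toFinset v w'
  · intro x hx
    simp only [Set.Finite.mem_toFinset] at hx
    simp [hw', hx]
  · rw [hvf, hew, hwt]; simp

lemma priority_trans (γ : PropForm ν) (σ : List (PropForm ν)) :
    ∀ a b c, priority γ σ a b = true → priority γ σ b c = true →
      priority γ σ a c = true := by
  intro a b c hab hbc
  simp only [priority, decide_eq_true_iff] at *
  rcases hab with h1 | ⟨h1, h1'⟩ <;> rcases hbc with h2 | ⟨h2, h2'⟩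
  · exact Or.inl (h1.trans h2)
  · exact Or.inl (h2 ▸ h1)
  · exact Or.inl (h1 ▸ h2)
  · exact Or.inr ⟨h1.trans h2, le_trans h2' h1'⟩

lemma priority_total (γ : PropForm ν) (σ : List (PropForm ν)) :
    ∀ a b, (priority γ σ a b || priority γ σ b a) = true := by
  intro a b
  simp only [priority, Bool.or_eq_true, decide_eq_true_iff]
  rcases lt_trichotomy (relDeg γ a.2 σ) (relDeg γ b.2 σ) with h | h | h
  · exact Or.inl (Or.inl h)
  · rcases le_total a.1 b.1 with h' | h'
    · exact Or.inr (Or.inr ⟨h.symm, h'⟩)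
    · exact Or.inl (Or.inr ⟨h, h'⟩)
  · exact Or.inr (Or.inl h)

/-- Once in the accumulator, always in the folded set. -/
lemma mem_foldl_gamma (σ : List (PropForm ν)) (k : ℕ) (γ δ : PropForm ν) :
    ∀ (l : List (PropForm ν)) (S : Set (PropForm ν)), δ ∈ S →
      δ ∈ l.foldl
        (fun Γ d =>
          if Entails Γ (PropForm.neg d) ∨ (k : ℕ∞) < relDeg γ d σ then Γ
          else insert d Γ) S := by
  intro l
  induction l with
  | nil => intro S hS; exact hS
  | cons d l ih =>
      intro S hS
      simp only [List.foldl_cons]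
      apply ih
      split
      · exact hS
      · exact Set.mem_insert_iff.mpr (Or.inr hS)

/-- Weak Inclusion: if γ is satisfiable (not a contradiction),
then for every σ and k, `σ * γ ⊢_k γ`. -/
theorem weak_inclusion {ν : Type} (γ : PropForm ν)
    (h : ¬ Contradiction γ) (σ : List (PropForm ν)) (k : ℕ) :
    InferK (revise σ γ) k γ := by
  classical
  by_cases htaut : Tautology γ
  · exact fun v _ => htaut v
  -- γ is contingent, so its language is nonempty and it is 0-relevant to itself
  obtain ⟨x, hx⟩ := lang_nonempty γ htaut h
  set σ' := revise σ γ with hσ'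
  have hkrel : KRel 0 γ γ σ' :=
    ⟨[], rfl, by simp, by exact List.isChain_pair.mpr ⟨x, hx, hx⟩⟩
  have hrel : relDeg γ γ σ' = 0 := by
    apply le_antisymm
    · exact sInf_le ⟨0, rfl, hkrel⟩
    · exact zero_le
  -- the pair (σ.length, γ) is an entry of the enumerated sequence
  have hmem : ((σ.length, γ) : ℕ × PropForm ν) ∈ σ'.zipIdx.map Prod.swap := by
    rw [List.mem_map]
    exact ⟨(γ, σ.length), List.mk_mem_zipIdx_iff_getElem?.mpr (by simp [hσ', revise]), rfl⟩
  set L := (σ'.zipIdx.map Prod.swap).mergeSort (priority γ σ') with hLdef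
  have hperm : L.Perm (σ'.zipIdx.map Prod.swap) := List.mergeSort_perm _ _
  have hmemL : ((σ.length, γ) : ℕ × PropForm ν) ∈ L := hperm.mem_iff.mpr hmem
  have hsorted := List.pairwise_mergeSort (priority_trans γ σ')
    (priority_total γ σ') (σ'.zipIdx.map Prod.swap)
  rw [← hLdef] at hsorted
  -- the head of the prioritized list is γ
  obtain ⟨b, rest, hL⟩ : ∃ b rest, L = b :: rest := by
    cases hLc : L with
    | nil => rw [hLc] at hmemL; simp at hmemL
    | cons b rest => exact ⟨b, rest, rfl⟩
  have hb : b.2 = γ := by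
    rw [hL] at hmemL
    rcases List.mem_cons.mp hmemL with hh | hh
    · rw [← hh]
    · -- b has priority over (σ.length, γ), which forces b = (σ.length, γ)
      rw [hL] at hsorted
      have hpr := (List.pairwise_cons.mp hsorted).1 _ hh
      simp only [priority, decide_eq_true_iff] at hpr
      have hbmem : b ∈ σ'.zipIdx.map Prod.swap := hperm.mem_iff.mp (hL ▸ List.mem_cons_self (a := b) (l := rest))
      have hbget : σ'[b.1]? = some b.2 := by
          obtain ⟨p, hp, hpb⟩ := List.mem_map.mp hbmem
          subst hpb
          exact List.mem_zipIdx_iff_getElem?.mp hp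
      have hblt : b.1 < σ'.length := by
        rcases List.getElem?_eq_some_iff.mp hbget with ⟨hh, -⟩
        exact hh
      have hlen : σ'.length = σ.length + 1 := by simp [hσ', revise]
      rcases hpr with hlt | ⟨_, hle⟩
      · rw [hrel] at hlt; exact absurd hlt (by simp)
      · have hb1 : b.1 = σ.length := le_antisymm (by omega) hle
        have := hbget
        rw [hb1] at this
        have hγ : σ'[σ.length]? = some γ := by simp [hσ', revise]
        rw [hγ] at this
        exact (Option.some_injective _ this).symm
  have hprio : prioritized γ σ' = γ :: rest.map Prod.snd := by
    rw [prioritized, ← hLdef, hL, List.map_cons, hb]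
  -- γ is added at the first step of the fold
  have hfirst :
      (if Entails (∅ : Set (PropForm ν)) (PropForm.neg γ) ∨
          (k : ℕ∞) < relDeg γ γ σ' then (∅ : Set (PropForm ν))
        else insert γ ∅) = insert γ ∅ := by
    rw [if_neg]
    rintro (hc | hc)
    · apply h
      intro v
      have := hc v (by simp)
      simpa [PropForm.eval] using this
    · rw [hrel] at hc
      exact absurd hc (by simp)
  have hγmem : γ ∈ Gamma σ' k γ := by
    rw [Gamma, hprio, List.foldl_cons, hfirst]
    exact mem_foldl_gamma σ' k γ γ _ _ (Set.mem_insert γ ∅)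
  intro v hv
  exact hv γ hγmem

end BeliefSeq
end

section
/- Weak Cut: if L_α = L_β, σ * α ⊢_k β and σ ⊢_k α, then σ ⊢_k β. -/
namespace BeliefSeq

variable {ν : Type}

/-! ### Auxiliary lemmas for Weak Cut -/

section WeakCutAux

variable {ν : Type}

lemma entails_mono {Γ Δ : Set (PropForm ν)} {φ : PropForm ν} (h : Γ ⊆ Δ)
    (he : Entails Γ φ) : Entails Δ φ :=
  fun v hv => he v fun ψ hψ => hv ψ (h hψ)

lemma directRel_congr {α β : PropForm ν} (hL : Lang α = Lang β) (χ : PropForm ν) :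
    DirectRel α χ ↔ DirectRel β χ := by unfold DirectRel; rw [hL]

lemma directRel_congr' {α β : PropForm ν} (hL : Lang α = Lang β) (χ : PropForm ν) :
    DirectRel χ α ↔ DirectRel χ β := by unfold DirectRel; rw [hL]

lemma kRel_congr {α β : PropForm ν} (hL : Lang α = Lang β) (k : ℕ) (δ : PropForm ν)
    (σ : List (PropForm ν)) : KRel k α δ σ ↔ KRel k β δ σ := by
  unfold KRel
  constructor <;> rintro ⟨l, hlen, hmem, hch⟩ <;> refine ⟨l, hlen, hmem, ?_⟩ <;>
    (unfold List.Chain' at hch ⊢; rw [List.isChain_cons] at hch ⊢)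
  · exact ⟨fun h hh => (directRel_congr hL h).mp (hch.1 h hh), hch.2⟩
  · exact ⟨fun h hh => (directRel_congr hL h).mpr (hch.1 h hh), hch.2⟩

lemma relDeg_congr {α β : PropForm ν} (hL : Lang α = Lang β) (δ : PropForm ν)
    (σ : List (PropForm ν)) : relDeg α δ σ = relDeg β δ σ := by
  unfold relDeg; congr 1; ext n
  simp only [Set.mem_setOf_eq]
  exact exists_congr fun k => and_congr_right fun _ => kRel_congr hL k δ σ

lemma chain_shorten {α β : PropForm ν} (hL : Lang α = Lang β) (σ : List (PropForm ν)) :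
    ∀ (l : List (PropForm ν)) (δ : PropForm ν), (∀ χ ∈ l, χ ∈ σ ++ [α]) →
      List.Chain' DirectRel (β :: (l ++ [δ])) →
      ∃ l', l'.length ≤ l.length ∧ (∀ χ ∈ l', χ ∈ σ) ∧
        List.Chain' DirectRel (β :: (l' ++ [δ])) := by
  intro l
  induction l using List.reverseRecOn with
  | nil => exact fun δ _ hch => ⟨[], le_rfl, by simp, hch⟩
  | append_singleton t χ ih =>
    intro δ hmem hch
    have hch' : List.Chain' DirectRel ((β :: (t ++ [χ])) ++ [δ]) := by
      simpa using hch
    unfold List.Chain' at hch'; rw [List.isChain_append] at hch'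
    obtain ⟨hc1, -, hlink⟩ := hch'
    have hgl : (β :: (t ++ [χ])).getLast? = some χ := by
      rw [← List.cons_append, List.getLast?_concat]
    have hlink' : DirectRel χ δ := hlink χ (by rw [hgl]; rfl) δ rfl
    rcases (by simpa using hmem χ (by simp) : χ ∈ σ ∨ χ = α) with hσ | rfl
    · obtain ⟨t', hlen, hmem', hch''⟩ := ih χ (fun x hx => hmem x (by simp [hx])) hc1
      refine ⟨t' ++ [χ], by simpa using Nat.succ_le_succ hlen, ?_, ?_⟩
      · intro x hx
        rcases List.mem_append.1 hx with h | h
        · exact hmem' x h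
        · simp only [List.mem_singleton] at h; subst h; exact hσ
      · have hgl' : (β :: (t' ++ [χ])).getLast? = some χ := by
          rw [← List.cons_append, List.getLast?_concat]
        have : List.Chain' DirectRel ((β :: (t' ++ [χ])) ++ [δ]) := by
          unfold List.Chain'; rw [List.isChain_append]
          refine ⟨hch'', List.isChain_singleton δ, ?_⟩
          intro x hx y hy
          rw [hgl'] at hx
          cases hx
          cases hy
          exact hlink'
        simpa using this
    · refine ⟨[], by simp, by simp, ?_⟩
      simp only [List.nil_append]
      exact List.isChain_pair.mpr ((directRel_congr hL δ).mp hlink')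

lemma kRel_mono {β δ : PropForm ν} {k : ℕ} {σ τ : List (PropForm ν)} (h : ∀ x ∈ σ, x ∈ τ) :
    KRel k β δ σ → KRel k β δ τ := by
  rintro ⟨l, hlen, hmem, hch⟩; exact ⟨l, hlen, fun χ hχ => h χ (hmem χ hχ), hch⟩

lemma relDeg_append {α β : PropForm ν} (hL : Lang α = Lang β) (δ : PropForm ν)
    (σ : List (PropForm ν)) : relDeg β δ (σ ++ [α]) = relDeg β δ σ := by
  apply le_antisymm
  · apply sInf_le_sInf
    rintro n ⟨k, hn, hk⟩
    exact ⟨k, hn, kRel_mono (fun x hx => by simp [hx]) hk⟩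
  · apply le_sInf
    rintro n ⟨k, rfl, l, hlen, hmem, hch⟩
    obtain ⟨l', hlen', hmem', hch'⟩ := chain_shorten hL σ l δ hmem hch
    calc relDeg β δ σ ≤ (l'.length : ℕ∞) :=
          sInf_le ⟨l'.length, rfl, l', rfl, hmem', hch'⟩
      _ ≤ (k : ℕ∞) := Nat.cast_le.mpr (hlen ▸ hlen')

lemma relDeg_zero {β δ : PropForm ν} (σ : List (PropForm ν)) (h : DirectRel β δ) :
    relDeg β δ σ = 0 := by
  apply le_antisymm _ zero_le
  exact sInf_le ⟨0, rfl, [], rfl, by simp, by simpa [List.Chain'] using List.isChain_pair.mpr h⟩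

lemma relDeg_top {β δ : PropForm ν} (σ : List (PropForm ν)) (h : Lang β = ∅) :
    relDeg β δ σ = ⊤ := by
  unfold relDeg
  convert sInf_empty (α := ℕ∞)
  · rfl
  ext n
  simp only [Set.mem_setOf_eq, Set.mem_empty_iff_false, iff_false]
  rintro ⟨k, rfl, l, hlen, hmem, hch⟩
  have hx : ∃ x, DirectRel β x := by
    cases l with
    | nil => exact ⟨δ, List.isChain_pair.mp (by simpa [List.Chain'] using hch)⟩
    | cons a t => exact ⟨a, (List.isChain_cons_cons.mp hch).1⟩
  obtain ⟨x, hx⟩ := hx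
  unfold DirectRel at hx
  rw [h] at hx
  simp at hx

lemma perm_pairwise_eq {A : Type _} {r : A → A → Prop} :
    ∀ {l₁ l₂ : List A}, List.Perm l₁ l₂ →
      (∀ x ∈ l₁, ∀ y ∈ l₁, r x y → r y x → x = y) →
      l₁.Pairwise r → l₂.Pairwise r → l₁ = l₂ := by
  intro l₁
  induction l₁ with
  | nil => intro l₂ hp _ _ _; exact hp.nil_eq
  | cons a t ih =>
    intro l₂ hp hanti h₁ h₂
    cases l₂ with
    | nil => exact absurd hp.symm.nil_eq (by simp)
    | cons b t₂ =>
      have hab : a = b := by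
        by_contra hne
        have hbl : b ∈ a :: t := hp.symm.subset (List.mem_cons_self)
        have hal : a ∈ b :: t₂ := hp.subset (List.mem_cons_self)
        have hbt : b ∈ t := (List.mem_cons.1 hbl).resolve_left (fun h => hne h.symm)
        have hat : a ∈ t₂ := (List.mem_cons.1 hal).resolve_left hne
        have rab : r a b := (List.pairwise_cons.1 h₁).1 b hbt
        have rba : r b a := (List.pairwise_cons.1 h₂).1 a hat
        exact hne (hanti a (List.mem_cons_self) b (List.mem_cons.2 (Or.inr hbt)) rab rba)
      subst hab
      have hpt : List.Perm t t₂ := hp.cons_inv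
      rw [ih hpt (fun x hx y hy => hanti x (List.mem_cons.2 (Or.inr hx)) y
        (List.mem_cons.2 (Or.inr hy))) (List.pairwise_cons.1 h₁).2 (List.pairwise_cons.1 h₂).2]

open Classical in
lemma subset_foldl_step (σ : List (PropForm ν)) (k : ℕ) (γ : PropForm ν) :
    ∀ (L : List (PropForm ν)) (Γ : Set (PropForm ν)),
      Γ ⊆ L.foldl (fun Γ δ =>
        if Entails Γ (PropForm.neg δ) ∨ (k : ℕ∞) < relDeg γ δ σ then Γ
        else insert δ Γ) Γ := by
  intro L
  induction L with
  | nil => exact fun Γ => subset_rfl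
  | cons δ L ih =>
    intro Γ
    simp only [List.foldl_cons]
    refine subset_trans ?_ (ih _)
    by_cases h : Entails Γ (PropForm.neg δ) ∨ (k : ℕ∞) < relDeg γ δ σ
    · rw [if_pos h]
    · rw [if_neg h]; exact Set.subset_insert _ _

open Classical in
lemma sat_foldl_step (σ : List (PropForm ν)) (k : ℕ) (γ : PropForm ν) :
    ∀ (L : List (PropForm ν)) (Γ : Set (PropForm ν)), Satisfiable Γ →
      Satisfiable (L.foldl (fun Γ δ =>
        if Entails Γ (PropForm.neg δ) ∨ (k : ℕ∞) < relDeg γ δ σ then Γ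
        else insert δ Γ) Γ) := by
  intro L
  induction L with
  | nil => exact fun Γ h => h
  | cons δ L ih =>
    intro Γ hΓ
    simp only [List.foldl_cons]
    by_cases h : Entails Γ (PropForm.neg δ) ∨ (k : ℕ∞) < relDeg γ δ σ
    · rw [if_pos h]; exact ih Γ hΓ
    · rw [if_neg h]
      push_neg at h
      obtain ⟨h1, -⟩ := h
      apply ih
      unfold Entails at h1
      push_neg at h1
      obtain ⟨v, hv, hδ⟩ := h1
      refine ⟨v, ?_⟩
      intro φ hφ
      rcases Set.mem_insert_iff.1 hφ with rfl | hφ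
      · have hf : PropForm.eval v (PropForm.neg φ) = false := by
          cases hev : PropForm.eval v (PropForm.neg φ)
          · rfl
          · exact absurd hev hδ
        simpa [PropForm.eval] using hf
      · exact hv φ hφ

open Classical in
lemma foldl_insert_step {α : PropForm ν} (σ : List (PropForm ν)) (k : ℕ) (γ : PropForm ν) :
    ∀ (L : List (PropForm ν)) (Γ : Set (PropForm ν)),
      Satisfiable (L.foldl (fun Γ δ =>
        if Entails Γ (PropForm.neg δ) ∨ (k : ℕ∞) < relDeg γ δ σ then Γ
        else insert δ Γ) Γ) →
      Entails (L.foldl (fun Γ δ =>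
        if Entails Γ (PropForm.neg δ) ∨ (k : ℕ∞) < relDeg γ δ σ then Γ
        else insert δ Γ) Γ) α →
      L.foldl (fun Γ δ =>
        if Entails Γ (PropForm.neg δ) ∨ (k : ℕ∞) < relDeg γ δ σ then Γ
        else insert δ Γ) (insert α Γ)
        = insert α (L.foldl (fun Γ δ =>
          if Entails Γ (PropForm.neg δ) ∨ (k : ℕ∞) < relDeg γ δ σ then Γ
          else insert δ Γ) Γ) := by
  intro L
  induction L with
  | nil => intro Γ _ _; rfl
  | cons δ L ih =>
    intro Γ hsat hent
    simp only [List.foldl_cons] at hsat hent ⊢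
    by_cases h : Entails Γ (PropForm.neg δ) ∨ (k : ℕ∞) < relDeg γ δ σ
    · rw [if_pos h] at hsat hent
      have h' : Entails (insert α Γ) (PropForm.neg δ) ∨ (k : ℕ∞) < relDeg γ δ σ := by
        rcases h with h | h
        · exact Or.inl (entails_mono (Set.subset_insert _ _) h)
        · exact Or.inr h
      rw [if_pos h, if_pos h']
      exact ih Γ hsat hent
    · rw [if_neg h] at hsat hent
      have h2 : ¬ (k : ℕ∞) < relDeg γ δ σ := fun hlt => h (Or.inr hlt)
      have h' : ¬ (Entails (insert α Γ) (PropForm.neg δ) ∨ (k : ℕ∞) < relDeg γ δ σ) := by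
        rintro (h1 | hlt)
        · obtain ⟨v, hv⟩ := hsat
          have hsub : insert δ Γ ⊆ _ := subset_foldl_step σ k γ L (insert δ Γ)
          have hvα : PropForm.eval v α = true := hent v hv
          have hvΓ : ∀ φ ∈ insert α Γ, PropForm.eval v φ = true := by
            intro φ hφ
            rcases Set.mem_insert_iff.1 hφ with rfl | hφ
            · exact hvα
            · exact hv φ (hsub (Set.mem_insert_of_mem _ hφ))
          have hneg := h1 v hvΓ
          have hδ : PropForm.eval v δ = true := hv δ (hsub (Set.mem_insert _ _))
          simp [PropForm.eval, hδ] at hneg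
        · exact h2 hlt
      rw [if_neg h, if_neg h']
      rw [Set.insert_comm]
      exact ih (insert δ Γ) hsat hent

open Classical in
lemma gamma_congr {α β : PropForm ν} (hL : Lang α = Lang β) (σ : List (PropForm ν)) (k : ℕ) :
    Gamma σ k α = Gamma σ k β := by
  have hrd : ∀ x : PropForm ν, relDeg α x σ = relDeg β x σ := fun x => relDeg_congr hL x σ
  have hstep : (fun (Γ : Set (PropForm ν)) δ =>
      if Entails Γ (PropForm.neg δ) ∨ (k : ℕ∞) < relDeg α δ σ then Γ else insert δ Γ)
      = (fun (Γ : Set (PropForm ν)) δ =>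
      if Entails Γ (PropForm.neg δ) ∨ (k : ℕ∞) < relDeg β δ σ then Γ else insert δ Γ) := by
    funext Γ δ
    rw [hrd δ]
  unfold Gamma prioritized priority
  rw [hstep]
  simp only [hrd]

end WeakCutAux

/-- Weak Cut: if `L_α = L_β`, `σ * α ⊢_k β` and `σ ⊢_k α`,
then `σ ⊢_k β`. -/
theorem weak_cut {ν : Type} (α β : PropForm ν)
    (hL : Lang α = Lang β) (σ : List (PropForm ν)) (k : ℕ)
    (hrev : InferK (revise σ α) k β) (hα : InferK σ k α) :
    InferK σ k β := by
  classical
  by_cases hne : (Lang α).Nonempty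
  · -- main case
    have hLβ : (Lang β).Nonempty := hL ▸ hne
    have hrd : ∀ x : PropForm ν, relDeg β x (σ ++ [α]) = relDeg β x σ :=
      fun x => relDeg_append hL x σ
    have hpri : priority β (σ ++ [α]) = priority β σ := by
      funext a b
      unfold priority
      rw [hrd, hrd]
    have hen : (σ ++ [α]).zipIdx.map Prod.swap = σ.zipIdx.map Prod.swap ++ [(σ.length, α)] := by
      simp [List.zipIdx_append]
    set r := priority β σ with hr
    have rIff : ∀ a b : ℕ × PropForm ν, r a b = true ↔
        (relDeg β a.2 σ < relDeg β b.2 σ ∨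
          (relDeg β a.2 σ = relDeg β b.2 σ ∧ b.1 ≤ a.1)) := by
      intro a b
      rw [hr]
      unfold priority
      exact decide_eq_true_iff
    have rtotal : ∀ a b : ℕ × PropForm ν, r a b || r b a := by
      intro a b
      rw [Bool.or_eq_true, rIff, rIff]
      rcases lt_trichotomy (relDeg β a.2 σ) (relDeg β b.2 σ) with h | h | h
      · exact Or.inl (Or.inl h)
      · rcases le_total b.1 a.1 with h' | h'
        · exact Or.inl (Or.inr ⟨h, h'⟩)
        · exact Or.inr (Or.inr ⟨h.symm, h'⟩)
      · exact Or.inr (Or.inl h)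
    have rtrans : ∀ a b c : ℕ × PropForm ν, r a b → r b c → r a c := by
      intro a b c hab hbc
      rw [rIff] at hab hbc ⊢
      rcases hab with h1 | ⟨h1, h1'⟩ <;> rcases hbc with h2 | ⟨h2, h2'⟩
      · exact Or.inl (h1.trans h2)
      · exact Or.inl (lt_of_lt_of_le h1 (le_of_eq h2))
      · exact Or.inl (lt_of_le_of_lt (le_of_eq h1) h2)
      · exact Or.inr ⟨h1.trans h2, h2'.trans h1'⟩
    have hDR : DirectRel β α := by
      unfold DirectRel
      rw [← hL, Set.inter_self]
      exact hne
    have hdeg0 : relDeg β α σ = 0 := relDeg_zero σ hDR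
    -- mergeSort equality
    have hms : (σ.zipIdx.map Prod.swap ++ [(σ.length, α)]).mergeSort r
        = (σ.length, α) :: (σ.zipIdx.map Prod.swap).mergeSort r := by
      rw [← hen]
      apply perm_pairwise_eq (r := fun x y : ℕ × PropForm ν => r x y = true)
      · refine ((List.mergeSort_perm _ _).trans ?_).trans
          (List.Perm.cons _ (List.mergeSort_perm (σ.zipIdx.map Prod.swap) r).symm)
        rw [hen]
        exact List.perm_append_singleton _ _
      · intro x hx y hy hxy hyx
        rw [List.mem_mergeSort] at hx hy
        rw [rIff] at hxy hyx
        have h1 : x.1 = y.1 := by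
          rcases hxy with h | ⟨h, h'⟩
          · rcases hyx with g | ⟨g, g'⟩
            · exact absurd g (lt_asymm h)
            · exact absurd g.symm (ne_of_lt h)
          · rcases hyx with g | ⟨g, g'⟩
            · exact absurd h (ne_of_gt g)
            · exact le_antisymm g' h'
        have hx2 : (σ ++ [α])[x.1]? = some x.2 := by
          obtain ⟨a, ha, rfl⟩ := List.mem_map.1 hx; exact List.mem_zipIdx_iff_getElem?.1 ha
        have hy2 : (σ ++ [α])[y.1]? = some y.2 := by
          obtain ⟨a, ha, rfl⟩ := List.mem_map.1 hy; exact List.mem_zipIdx_iff_getElem?.1 ha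
        rw [h1] at hx2
        rw [hx2] at hy2
        have h2 : x.2 = y.2 := by
          injection hy2
        exact Prod.ext h1 h2
      · exact List.pairwise_mergeSort rtrans rtotal _
      · rw [List.pairwise_cons]
        constructor
        · intro y hy
          rw [List.mem_mergeSort] at hy
          rw [rIff]
          rcases eq_or_lt_of_le (zero_le (a := relDeg β y.2 σ)) with h | h
          · refine Or.inr ⟨hdeg0.trans h, ?_⟩
            obtain ⟨⟨c, i⟩, ha, rfl⟩ := List.mem_map.1 hy
            exact le_of_lt (by simpa using (List.mem_zipIdx ha).2.1)
          · exact Or.inl (hdeg0 ▸ h)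
        · exact List.pairwise_mergeSort rtrans rtotal _
    have hprio : prioritized β (σ ++ [α]) = α :: prioritized β σ := by
      unfold prioritized
      rw [hpri, hen, ← hr, hms]
      rfl
    -- the query α is not a contradiction
    have hnc : ¬ Entails (∅ : Set (PropForm ν)) (PropForm.neg α) := by
      intro hcon
      have hexpr : Expresses (∅ : Set ν) α := by
        refine ⟨PropForm.fls, fun v => ?_, by simp [PropForm.vars]⟩
        have hv := hcon v (fun φ hφ => absurd hφ (Set.notMem_empty φ))
        simp only [PropForm.eval] at hv ⊢
        rcases hev : PropForm.eval v α with _ | _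
        · rfl
        · rw [hev] at hv; simp at hv
      have hsub : Lang α ⊆ ∅ := Set.sInter_subset_of_mem hexpr
      rw [Set.subset_empty_iff] at hsub
      exact hne.ne_empty hsub
    have hcond : ¬ (Entails (∅ : Set (PropForm ν)) (PropForm.neg α) ∨
        (k : ℕ∞) < relDeg β α σ) := by
      rintro (h | h)
      · exact hnc h
      · rw [hdeg0] at h
        exact absurd h (by simp)
    -- rewrite hrev
    have hstep2 : (fun (Γ : Set (PropForm ν)) δ =>
        if Entails Γ (PropForm.neg δ) ∨ (k : ℕ∞) < relDeg β δ (σ ++ [α]) then Γ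
        else insert δ Γ)
        = (fun (Γ : Set (PropForm ν)) δ =>
        if Entails Γ (PropForm.neg δ) ∨ (k : ℕ∞) < relDeg β δ σ then Γ
        else insert δ Γ) := by
      funext Γ δ
      rw [hrd δ]
    unfold InferK revise Gamma at hrev
    rw [hstep2, hprio, List.foldl_cons, if_neg hcond] at hrev
    have hGα : Entails (Gamma σ k β) α := by
      have := hα
      unfold InferK at this
      rwa [gamma_congr hL σ k] at this
    have hGfold : Gamma σ k β = (prioritized β σ).foldl (fun Γ δ =>
        if Entails Γ (PropForm.neg δ) ∨ (k : ℕ∞) < relDeg β δ σ then Γ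
        else insert δ Γ) ∅ := by
      unfold Gamma
      rfl
    have hsat0 : Satisfiable ((prioritized β σ).foldl (fun Γ δ =>
        if Entails Γ (PropForm.neg δ) ∨ (k : ℕ∞) < relDeg β δ σ then Γ
        else insert δ Γ) (∅ : Set (PropForm ν))) :=
      sat_foldl_step σ k β _ ∅ ⟨fun _ => true, fun φ hφ => absurd hφ (Set.notMem_empty φ)⟩
    have hentα : Entails ((prioritized β σ).foldl (fun Γ δ =>
        if Entails Γ (PropForm.neg δ) ∨ (k : ℕ∞) < relDeg β δ σ then Γ
        else insert δ Γ) (∅ : Set (PropForm ν))) α := by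
      rw [← hGfold]; exact hGα
    rw [foldl_insert_step σ k β _ ∅ hsat0 hentα] at hrev
    rw [← hGfold] at hrev
    -- conclude
    unfold InferK
    intro v hv
    apply hrev v
    intro φ hφ
    rcases Set.mem_insert_iff.1 hφ with rfl | hφ
    · exact hGα v hv
    · exact hv φ hφ
  · -- degenerate case : Lang α = ∅
    have hLα : Lang α = ∅ := Set.not_nonempty_iff_eq_empty.mp hne
    have hLβ : Lang β = ∅ := hL ▸ hLα
    have hfold : ∀ (σ'' : List (PropForm ν)) (L : List (PropForm ν)) (Γ : Set (PropForm ν)),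
        L.foldl (fun Γ δ =>
          if Entails Γ (PropForm.neg δ) ∨ (k : ℕ∞) < relDeg β δ σ'' then Γ
          else insert δ Γ) Γ = Γ := by
      intro σ'' L
      induction L with
      | nil => intro Γ; rfl
      | cons δ L ih =>
        intro Γ
        simp only [List.foldl_cons]
        rw [if_pos (Or.inr (by rw [relDeg_top σ'' hLβ]; exact lt_of_le_of_ne le_top (by simp)))]
        exact ih Γ
    have hg : ∀ σ'' : List (PropForm ν), Gamma σ'' k β = ∅ := by
      intro σ''
      unfold Gamma
      exact hfold σ'' _ ∅
    unfold InferK at hrev ⊢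
    rw [hg] at hrev
    rw [hg]
    exact hrev

end BeliefSeq
end
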